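/- Let S ⊆ ℝⁿ be nonempty and finite, d ∈ ℕ, and δ > 0. Assume that every nonzero eigenvalue of the moment matrix M_{S,d} is at least δ. Let r ∈ ℝ[x₁,…,xₙ] be of the form r = ∑_{i=1}^{t₀} q_i² + p₀, where each q_i has total degree at most d and p₀ has total degree at most 2d and vanishes at every point of S. Then there exist polynomials s₁,…,s_t of total degree at most d and a polynomial p of total degree at most 2d vanishing at every point of S such that r = ∑_{i=1}^{t} s_i² + p and ∑_{i=1}^{t} ‖s_i‖² ≤ (1/δ)·(1/|S|)·∑_{α∈S} r(α), where ‖s‖² denotes the sum of the squares of the coefficients of s in the monomial basis. -/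

import Mathlib

open Finset

/-- Exponent vectors of total degree at most `d` (each component is at most `d`,
so we encode components in `Fin (d+1)`). -/
abbrev ExpIdx (n d : ℕ) := {σ : Fin n → Fin (d + 1) // ∑ i, (σ i : ℕ) ≤ d}

/-- The moment matrix `M_{S,d}` of a finite set `S ⊆ ℝⁿ` up to degree `d`. -/
noncomputable def momentMatrix (n d : ℕ) (S : Finset (Fin n → ℝ)) :
    Matrix (ExpIdx n d) (ExpIdx n d) ℝ :=
  Matrix.of fun σ τ =>
    (S.card : ℝ)⁻¹ * ∑ α ∈ S, ∏ i, (α i) ^ ((σ.1 i : ℕ) + (τ.1 i : ℕ))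

/-- The sum of the squares of the coefficients of a polynomial in the monomial basis. -/
noncomputable def coeffNormSq {n : ℕ} (s : MvPolynomial (Fin n) ℝ) : ℝ :=
  ∑ m ∈ s.support, (MvPolynomial.coeff m s) ^ 2

section Aux

open Matrix

variable {n d : ℕ}

/-- The finitely supported exponent vector of an `ExpIdx`. -/
noncomputable def expOf (σ : ExpIdx n d) : Fin n →₀ ℕ :=
  Finsupp.equivFunOnFinite.symm fun i => (σ.1 i : ℕ)

lemma expOf_apply (σ : ExpIdx n d) (i : Fin n) : expOf σ i = (σ.1 i : ℕ) := rfl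

lemma expOf_injective : Function.Injective (expOf (n := n) (d := d)) := by
  intro σ τ h
  have h2 : (fun i => ((σ.1 i : ℕ))) = fun i => ((τ.1 i : ℕ)) :=
    Finsupp.equivFunOnFinite.symm.injective h
  exact Subtype.ext (funext fun i => Fin.ext (congrFun h2 i))

lemma sum_support_expOf (σ : ExpIdx n d) :
    ∑ i ∈ (expOf σ).support, expOf σ i ≤ d := by
  calc ∑ i ∈ (expOf σ).support, expOf σ i
      ≤ ∑ i : Fin n, expOf σ i :=
        Finset.sum_le_sum_of_subset (Finset.subset_univ _)
    _ = ∑ i, (σ.1 i : ℕ) := rfl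
    _ ≤ d := σ.2

lemma exists_expOf {m : Fin n →₀ ℕ} (hm : ∑ i ∈ m.support, m i ≤ d) :
    ∃ σ : ExpIdx n d, expOf σ = m := by
  have hle : ∀ i, m i ≤ d := by
    intro i
    by_cases h : m i = 0
    · omega
    · exact le_trans (Finset.single_le_sum (fun j _ => Nat.zero_le _)
        (Finsupp.mem_support_iff.mpr h)) hm
  refine ⟨⟨fun i => ⟨m i, Nat.lt_succ_of_le (hle i)⟩, ?_⟩, ?_⟩
  · calc ∑ i : Fin n, ((⟨m i, Nat.lt_succ_of_le (hle i)⟩ : Fin (d+1)) : ℕ)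
        = ∑ i : Fin n, m i := rfl
      _ = ∑ i ∈ m.support, m i :=
          (Finset.sum_subset (Finset.subset_univ _)
            (fun i _ hi => Finsupp.notMem_support_iff.mp hi)).symm
      _ ≤ d := hm
  · ext i
    rfl

/-- The polynomial with coefficient vector `v`. -/
noncomputable def toPoly (v : ExpIdx n d → ℝ) : MvPolynomial (Fin n) ℝ :=
  ∑ σ : ExpIdx n d, MvPolynomial.monomial (expOf σ) (v σ)

lemma coeff_toPoly (v : ExpIdx n d → ℝ) (τ : ExpIdx n d) :
    MvPolynomial.coeff (expOf τ) (toPoly v) = v τ := by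
  simp only [toPoly, MvPolynomial.coeff_sum, MvPolynomial.coeff_monomial]
  rw [Finset.sum_eq_single τ]
  · simp
  · intro σ _ hστ
    exact if_neg fun h => hστ (expOf_injective h)
  · intro h
    exact absurd (Finset.mem_univ τ) h

lemma coeff_toPoly_ne (v : ExpIdx n d → ℝ) {m : Fin n →₀ ℕ}
    (hm : ∀ σ : ExpIdx n d, expOf σ ≠ m) :
    MvPolynomial.coeff m (toPoly v) = 0 := by
  simp only [toPoly, MvPolynomial.coeff_sum, MvPolynomial.coeff_monomial]
  exact Finset.sum_eq_zero fun σ _ => if_neg (hm σ)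

lemma toPoly_coeff {q : MvPolynomial (Fin n) ℝ} (hq : q.totalDegree ≤ d) :
    toPoly (n := n) (d := d) (fun σ => MvPolynomial.coeff (expOf σ) q) = q := by
  apply MvPolynomial.ext
  intro m
  by_cases h : ∃ σ : ExpIdx n d, expOf σ = m
  · obtain ⟨σ, rfl⟩ := h
    rw [coeff_toPoly]
  · push_neg at h
    rw [coeff_toPoly_ne _ h]
    symm
    apply MvPolynomial.coeff_eq_zero_of_totalDegree_lt
    by_contra hlt
    push_neg at hlt
    obtain ⟨σ, hσ⟩ := exists_expOf (le_trans hlt hq)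
    exact h σ hσ

lemma totalDegree_toPoly (v : ExpIdx n d → ℝ) : (toPoly v).totalDegree ≤ d :=
  MvPolynomial.totalDegree_finsetSum_le fun σ _ =>
    le_trans (MvPolynomial.totalDegree_monomial_le _ _) (sum_support_expOf σ)

lemma coeffNormSq_toPoly (v : ExpIdx n d → ℝ) :
    coeffNormSq (toPoly v) = ∑ σ : ExpIdx n d, v σ ^ 2 := by
  have hsub : (toPoly v).support ⊆ Finset.univ.image (expOf (n := n) (d := d)) := by
    intro m hm
    rcases Classical.em (∃ σ : ExpIdx n d, expOf σ = m) with ⟨σ, rfl⟩ | h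
    · exact Finset.mem_image_of_mem _ (Finset.mem_univ σ)
    · push_neg at h
      exact absurd (coeff_toPoly_ne v h) (MvPolynomial.mem_support_iff.mp hm)
  rw [coeffNormSq, Finset.sum_subset hsub (fun m _ hm => by
    rw [MvPolynomial.notMem_support_iff.mp hm]; ring)]
  rw [Finset.sum_image (fun σ _ τ _ h => expOf_injective h)]
  exact Finset.sum_congr rfl fun σ _ => by rw [coeff_toPoly]

/-- The moment vector of a point `α`. -/
noncomputable def wvec (α : Fin n → ℝ) : ExpIdx n d → ℝ := fun σ => ∏ i, α i ^ (σ.1 i : ℕ)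

lemma eval_toPoly (α : Fin n → ℝ) (v : ExpIdx n d → ℝ) :
    MvPolynomial.eval α (toPoly v) = ∑ σ : ExpIdx n d, v σ * wvec α σ := by
  rw [toPoly, map_sum]
  refine Finset.sum_congr rfl fun σ _ => ?_
  rw [MvPolynomial.eval_monomial, wvec]
  congr 1
  rw [Finsupp.prod_fintype _ _ (fun i => pow_zero _)]
  rfl

lemma momentMatrix_apply (S : Finset (Fin n → ℝ)) (σ τ : ExpIdx n d) :
    momentMatrix n d S σ τ = (S.card : ℝ)⁻¹ * ∑ α ∈ S, wvec α σ * wvec α τ := by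
  simp only [momentMatrix, Matrix.of_apply, wvec]
  congr 1
  refine Finset.sum_congr rfl fun α _ => ?_
  rw [← Finset.prod_mul_distrib]
  exact Finset.prod_congr rfl fun i _ => pow_add _ _ _

lemma quadForm (S : Finset (Fin n → ℝ)) (v : ExpIdx n d → ℝ) :
    v ⬝ᵥ (momentMatrix n d S).mulVec v
      = (S.card : ℝ)⁻¹ * ∑ α ∈ S, (MvPolynomial.eval α (toPoly v)) ^ 2 := by
  have key : v ⬝ᵥ (momentMatrix n d S).mulVec v
      = ∑ σ : ExpIdx n d, ∑ τ : ExpIdx n d, ∑ α ∈ S,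
          (S.card : ℝ)⁻¹ * ((v σ * wvec α σ) * (v τ * wvec α τ)) := by
    show ∑ σ, v σ * ∑ τ, momentMatrix n d S σ τ * v τ = _
    refine Finset.sum_congr rfl fun σ _ => ?_
    rw [Finset.mul_sum]
    refine Finset.sum_congr rfl fun τ _ => ?_
    rw [momentMatrix_apply]
    simp only [Finset.sum_mul, Finset.mul_sum]
    exact Finset.sum_congr rfl fun α _ => by ring
  calc v ⬝ᵥ (momentMatrix n d S).mulVec v
      = ∑ σ : ExpIdx n d, ∑ α ∈ S, ∑ τ : ExpIdx n d,
          (S.card : ℝ)⁻¹ * ((v σ * wvec α σ) * (v τ * wvec α τ)) := by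
        rw [key]; exact Finset.sum_congr rfl fun σ _ => Finset.sum_comm
    _ = ∑ α ∈ S, ∑ σ : ExpIdx n d, ∑ τ : ExpIdx n d,
          (S.card : ℝ)⁻¹ * ((v σ * wvec α σ) * (v τ * wvec α τ)) := Finset.sum_comm
    _ = (S.card : ℝ)⁻¹ * ∑ α ∈ S, (MvPolynomial.eval α (toPoly v)) ^ 2 := by
        rw [Finset.mul_sum]
        refine Finset.sum_congr rfl fun α _ => ?_
        rw [eval_toPoly, sq, Finset.sum_mul_sum]
        rw [Finset.mul_sum]
        refine Finset.sum_congr rfl fun σ _ => ?_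
        rw [Finset.mul_sum]

end Aux

open Matrix

theorem statement2 (n d : ℕ) (S : Finset (Fin n → ℝ)) (hS : S.Nonempty)
    (δ : ℝ) (hδ : 0 < δ)
    (hspec : ∀ (μ : ℝ) (v : ExpIdx n d → ℝ), v ≠ 0 →
      (momentMatrix n d S).mulVec v = μ • v → μ ≠ 0 → δ ≤ μ)
    (r : MvPolynomial (Fin n) ℝ) (t₀ : ℕ) (q : Fin t₀ → MvPolynomial (Fin n) ℝ)
    (p₀ : MvPolynomial (Fin n) ℝ)
    (hq : ∀ i, (q i).totalDegree ≤ d)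
    (hp₀deg : p₀.totalDegree ≤ 2 * d)
    (hp₀ : ∀ α ∈ S, MvPolynomial.eval α p₀ = 0)
    (hr : r = (∑ i, (q i) ^ 2) + p₀) :
    ∃ (t : ℕ) (s : Fin t → MvPolynomial (Fin n) ℝ) (p : MvPolynomial (Fin n) ℝ),
      (∀ i, (s i).totalDegree ≤ d) ∧
      p.totalDegree ≤ 2 * d ∧
      (∀ α ∈ S, MvPolynomial.eval α p = 0) ∧
      r = (∑ i, (s i) ^ 2) + p ∧
      ∑ i, coeffNormSq (s i) ≤
        (1 / δ) * (1 / (S.card : ℝ)) * ∑ α ∈ S, MvPolynomial.eval α r := by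
  classical
  set M := momentMatrix n d S with hMdef
  -- M is symmetric
  have hsym : M.IsHermitian := by
    show Mᴴ = M
    ext σ τ
    simp only [Matrix.conjTranspose_apply, star_trivial, hMdef, momentMatrix, Matrix.of_apply]
    congr 1
    exact Finset.sum_congr rfl fun α _ => Finset.prod_congr rfl fun i _ => by rw [Nat.add_comm]
  set b := hsym.eigenvectorBasis with hbdef
  set μ := hsym.eigenvalues with hμdef
  set u : ExpIdx n d → ExpIdx n d → ℝ := fun j => b j with hudef
  have heig : ∀ j, M.mulVec (u j) = μ j • u j := fun j => hsym.mulVec_eigenvectorBasis j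
  have hortho : ∀ j k, u j ⬝ᵥ u k = if j = k then 1 else 0 := by
    intro j k
    have h := orthonormal_iff_ite.mp b.orthonormal j k
    rw [PiLp.inner_apply] at h
    simp [dotProduct, u] at h ⊢
    rw [← h]
    exact Finset.sum_congr rfl fun x _ => mul_comm _ _
  have hrep : ∀ (c : ExpIdx n d → ℝ) (σ : ExpIdx n d),
      c σ = ∑ j, (u j ⬝ᵥ c) * u j σ := by
    intro c σ
    calc c σ = (∑ j, (inner (𝕜 := ℝ) (b j) (WithLp.toLp 2 c)) • b j) σ := (congrArg (fun x => x σ) (b.sum_repr' (WithLp.toLp 2 c))).symm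
      _ = ∑ j, ((inner (𝕜 := ℝ) (b j) (WithLp.toLp 2 c)) • b j) σ := by rw [WithLp.ofLp_sum, Finset.sum_apply]
      _ = ∑ j, (u j ⬝ᵥ c) * u j σ := Finset.sum_congr rfl fun j _ => by
            rw [PiLp.inner_apply]
            simp [dotProduct, u, PiLp.smul_apply, smul_eq_mul, mul_comm]
  set J : Finset (ExpIdx n d) := Finset.univ.filter (fun j => μ j ≠ 0) with hJdef
  set K : Finset (ExpIdx n d) := Finset.univ.filter (fun j => ¬ μ j ≠ 0) with hKdef
  set a : Fin t₀ → ExpIdx n d → ℝ :=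
    fun i j => u j ⬝ᵥ (fun σ => MvPolynomial.coeff (expOf σ) (q i)) with hadef
  set svf : Fin t₀ → ExpIdx n d → ℝ := fun i σ => ∑ j ∈ J, a i j * u j σ with hsvfdef
  set kvf : Fin t₀ → ExpIdx n d → ℝ := fun i σ => ∑ j ∈ K, a i j * u j σ with hkvfdef
  -- decomposition of coefficient vectors
  have hsplit : ∀ i σ, MvPolynomial.coeff (expOf σ) (q i) = svf i σ + kvf i σ := by
    intro i σ
    rw [hrep (fun σ => MvPolynomial.coeff (expOf σ) (q i)) σ]
    exact (Finset.sum_filter_add_sum_filter_not Finset.univ (fun j => μ j ≠ 0) _).symm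
  -- mulVec on eigen-combinations
  have hMsum : ∀ (F : Finset (ExpIdx n d)) (f : ExpIdx n d → ℝ),
      M.mulVec (fun σ => ∑ j ∈ F, f j * u j σ) = fun σ => ∑ j ∈ F, f j * (μ j * u j σ) := by
    intro F f
    funext σ
    show ∑ τ, M σ τ * ∑ j ∈ F, f j * u j τ = _
    calc ∑ τ, M σ τ * ∑ j ∈ F, f j * u j τ
        = ∑ τ, ∑ j ∈ F, f j * (M σ τ * u j τ) := Finset.sum_congr rfl fun τ _ => by
            rw [Finset.mul_sum]; exact Finset.sum_congr rfl fun j _ => by ring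
      _ = ∑ j ∈ F, ∑ τ, f j * (M σ τ * u j τ) := Finset.sum_comm
      _ = ∑ j ∈ F, f j * (μ j * u j σ) := by
            refine Finset.sum_congr rfl fun j _ => ?_
            rw [← Finset.mul_sum]
            congr 1
            have h := congrFun (heig j) σ
            simpa [Matrix.mulVec, dotProduct, Pi.smul_apply, smul_eq_mul] using h
  -- dot products of eigen-combinations
  have hdot : ∀ (f g : ExpIdx n d → ℝ),
      (fun σ => ∑ j ∈ J, f j * u j σ) ⬝ᵥ (fun σ => ∑ k ∈ J, g k * u k σ)
        = ∑ j ∈ J, f j * g j := by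
    intro f g
    show ∑ σ, (∑ j ∈ J, f j * u j σ) * (∑ k ∈ J, g k * u k σ) = _
    calc ∑ σ, (∑ j ∈ J, f j * u j σ) * (∑ k ∈ J, g k * u k σ)
        = ∑ σ, ∑ j ∈ J, ∑ k ∈ J, (f j * u j σ) * (g k * u k σ) :=
          Finset.sum_congr rfl fun σ _ => by rw [Finset.sum_mul_sum]
      _ = ∑ j ∈ J, ∑ σ, ∑ k ∈ J, (f j * u j σ) * (g k * u k σ) := Finset.sum_comm
      _ = ∑ j ∈ J, ∑ k ∈ J, ∑ σ, (f j * u j σ) * (g k * u k σ) :=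
          Finset.sum_congr rfl fun j _ => Finset.sum_comm
      _ = ∑ j ∈ J, ∑ k ∈ J, (f j * g k) * (u j ⬝ᵥ u k) :=
          Finset.sum_congr rfl fun j _ => Finset.sum_congr rfl fun k _ => by
            rw [dotProduct, Finset.mul_sum]
            exact Finset.sum_congr rfl fun σ _ => by ring
      _ = ∑ j ∈ J, f j * g j := by
          refine Finset.sum_congr rfl fun j hj => ?_
          simp only [hortho, mul_ite, mul_one, mul_zero]
          rw [Finset.sum_ite_eq]
          exact if_pos hj
  -- the kernel part kills the moment matrix
  have hMkzero : ∀ i, M.mulVec (kvf i) = 0 := by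
    intro i
    have h : M.mulVec (kvf i) = fun σ => ∑ j ∈ K, a i j * (μ j * u j σ) := hMsum K (a i)
    rw [h]
    funext σ
    refine Finset.sum_eq_zero fun j hj => ?_
    have hj0 : μ j = 0 := not_not.mp (Finset.mem_filter.mp hj).2
    simp [hj0]
  have hcard : (0:ℝ) < (S.card : ℝ) := by
    exact_mod_cast hS.card_pos
  -- the kernel part vanishes on S
  have hkvanish : ∀ i, ∀ α ∈ S, MvPolynomial.eval α (toPoly (kvf i)) = 0 := by
    intro i
    have h0 : (S.card : ℝ)⁻¹ * ∑ α ∈ S, (MvPolynomial.eval α (toPoly (kvf i))) ^ 2 = 0 := by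
      rw [← quadForm]
      rw [hMkzero i]
      exact dotProduct_zero _
    have hsum0 : ∑ α ∈ S, (MvPolynomial.eval α (toPoly (kvf i))) ^ 2 = 0 := by
      rcases mul_eq_zero.mp h0 with h | h
      · exact absurd h (inv_ne_zero (ne_of_gt hcard))
      · exact h
    intro α hα
    have h := (Finset.sum_eq_zero_iff_of_nonneg (fun α _ => sq_nonneg _)).mp hsum0 α hα
    exact (pow_eq_zero_iff two_ne_zero).mp h
  -- eigenvalues on J are at least δ
  have hμJ : ∀ j ∈ J, δ ≤ μ j := by
    intro j hj
    have hmem := (Finset.mem_filter.mp hj).2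
    refine hspec (μ j) (u j) ?_ (heig j) hmem
    exact fun h0 => b.orthonormal.ne_zero j (by ext x; exact congrFun h0 x)
  -- the quadratic form value on svf
  have hkey : ∀ i, (S.card : ℝ)⁻¹ * ∑ α ∈ S, (MvPolynomial.eval α (toPoly (svf i))) ^ 2
      = ∑ j ∈ J, μ j * (a i j) ^ 2 := by
    intro i
    rw [← quadForm]
    have h1 : M.mulVec (svf i) = fun σ => ∑ j ∈ J, (a i j * μ j) * u j σ := by
      have h := hMsum J (a i)
      rw [show M.mulVec (svf i) = M.mulVec (fun σ => ∑ j ∈ J, a i j * u j σ) from rfl, h]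
      funext σ
      exact Finset.sum_congr rfl fun j _ => by ring
    calc svf i ⬝ᵥ M.mulVec (svf i)
        = ∑ j ∈ J, a i j * (a i j * μ j) := by rw [h1]; exact hdot _ _
      _ = ∑ j ∈ J, μ j * (a i j) ^ 2 := Finset.sum_congr rfl fun j _ => by ring
  -- coefficient norms of svf
  have hnorm : ∀ i, coeffNormSq (toPoly (svf i)) = ∑ j ∈ J, (a i j) ^ 2 := by
    intro i
    rw [coeffNormSq_toPoly]
    calc ∑ σ, (svf i σ) ^ 2 = svf i ⬝ᵥ svf i := by
          rw [dotProduct]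
          exact Finset.sum_congr rfl fun σ _ => sq _
      _ = ∑ j ∈ J, a i j * a i j := hdot _ _
      _ = ∑ j ∈ J, (a i j) ^ 2 := Finset.sum_congr rfl fun j _ => (sq _).symm
  -- evaluation decomposition
  have heval : ∀ i α, MvPolynomial.eval α (q i)
      = MvPolynomial.eval α (toPoly (svf i)) + MvPolynomial.eval α (toPoly (kvf i)) := by
    intro i α
    conv_lhs => rw [← toPoly_coeff (hq i)]
    rw [eval_toPoly, eval_toPoly, eval_toPoly, ← Finset.sum_add_distrib]
    refine Finset.sum_congr rfl fun σ _ => ?_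
    rw [hsplit i σ]
    ring
  have hevalS : ∀ α ∈ S, ∀ i, MvPolynomial.eval α (q i)
      = MvPolynomial.eval α (toPoly (svf i)) := by
    intro α hα i
    rw [heval i α, hkvanish i α hα, add_zero]
  have hevalr : ∀ α ∈ S, MvPolynomial.eval α r
      = ∑ i, (MvPolynomial.eval α (toPoly (svf i))) ^ 2 := by
    intro α hα
    rw [hr, map_add, map_sum, hp₀ α hα, add_zero]
    exact Finset.sum_congr rfl fun i _ => by rw [map_pow, hevalS α hα i]
  -- witnesses
  refine ⟨t₀, fun i => toPoly (svf i), r - ∑ i, (toPoly (svf i)) ^ 2,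
    fun i => totalDegree_toPoly _, ?_, ?_, by ring, ?_⟩
  · -- degree of p
    have hdegsum : (∑ i : Fin t₀, (toPoly (svf i)) ^ 2).totalDegree ≤ 2 * d :=
      MvPolynomial.totalDegree_finsetSum_le fun i _ =>
        le_trans (MvPolynomial.totalDegree_pow _ _)
          (Nat.mul_le_mul_left 2 (totalDegree_toPoly _))
    have hdegr : r.totalDegree ≤ 2 * d := by
      rw [hr]
      refine le_trans (MvPolynomial.totalDegree_add _ _) (max_le ?_ hp₀deg)
      exact MvPolynomial.totalDegree_finsetSum_le fun i _ =>
        le_trans (MvPolynomial.totalDegree_pow _ _) (Nat.mul_le_mul_left 2 (hq i))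
    calc (r - ∑ i : Fin t₀, (toPoly (svf i)) ^ 2).totalDegree
        = (r + (- ∑ i : Fin t₀, (toPoly (svf i)) ^ 2)).totalDegree := by rw [sub_eq_add_neg]
      _ ≤ max r.totalDegree (- ∑ i : Fin t₀, (toPoly (svf i)) ^ 2).totalDegree :=
          MvPolynomial.totalDegree_add _ _
      _ ≤ 2 * d := by rw [MvPolynomial.totalDegree_neg]; exact max_le hdegr hdegsum
  · -- p vanishes on S
    intro α hα
    rw [map_sub, hevalr α hα, map_sum]
    rw [Finset.sum_congr rfl fun i (_ : i ∈ Finset.univ) => (map_pow _ _ 2 : _)]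
    ring
  · -- the norm bound
    have hstep : ∀ i, ∑ j ∈ J, (a i j) ^ 2 ≤ (1 / δ) * ∑ j ∈ J, μ j * (a i j) ^ 2 := by
      intro i
      have h1 : δ * ∑ j ∈ J, (a i j) ^ 2 ≤ ∑ j ∈ J, μ j * (a i j) ^ 2 := by
        rw [Finset.mul_sum]
        exact Finset.sum_le_sum fun j hj =>
          mul_le_mul_of_nonneg_right (hμJ j hj) (sq_nonneg _)
      calc ∑ j ∈ J, (a i j) ^ 2 = (1 / δ) * (δ * ∑ j ∈ J, (a i j) ^ 2) := by
            field_simp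
        _ ≤ (1 / δ) * ∑ j ∈ J, μ j * (a i j) ^ 2 :=
            mul_le_mul_of_nonneg_left h1 (by positivity)
    calc ∑ i, coeffNormSq (toPoly (svf i))
        = ∑ i, ∑ j ∈ J, (a i j) ^ 2 := Finset.sum_congr rfl fun i _ => hnorm i
      _ ≤ ∑ i, (1 / δ) * ∑ j ∈ J, μ j * (a i j) ^ 2 :=
          Finset.sum_le_sum fun i _ => hstep i
      _ = (1 / δ) * ∑ i, ∑ j ∈ J, μ j * (a i j) ^ 2 := (Finset.mul_sum _ _ _).symm
      _ = (1 / δ) * ∑ i, (S.card : ℝ)⁻¹ * ∑ α ∈ S, (MvPolynomial.eval α (toPoly (svf i))) ^ 2 := by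
          congr 1
          exact Finset.sum_congr rfl fun i _ => (hkey i).symm
      _ = (1 / δ) * ((S.card : ℝ)⁻¹ * ∑ i, ∑ α ∈ S, (MvPolynomial.eval α (toPoly (svf i))) ^ 2) := by
          rw [← Finset.mul_sum]
      _ = (1 / δ) * (1 / (S.card : ℝ)) * ∑ α ∈ S, MvPolynomial.eval α r := by
          have hsum : ∑ i, ∑ α ∈ S, (MvPolynomial.eval α (toPoly (svf i))) ^ 2
              = ∑ α ∈ S, MvPolynomial.eval α r := by
            rw [Finset.sum_comm]
            exact Finset.sum_congr rfl fun α hα => (hevalr α hα).symm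
          rw [hsum]
          ring
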